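/- Let c > 0 and 0 < ε < 1, and set c(ε) = (1−ε)c/√2. Then there is a constant C (depending on c and ε) such that for all x ≥ 16, ∑_{p ≤ √x} p · e^{−c√(log p)} ≤ C · x · e^{−c(ε)√(log x)}, where the sum is over primes p ≤ √x. -/

import Mathlib

open Real Finset
open scoped Classical

theorem stmt_13 (c ε : ℝ) (hc : 0 < c) (hε0 : 0 < ε) (hε1 : ε < 1) :
    ∃ C : ℝ, 0 < C ∧ ∀ x : ℝ, 16 ≤ x →
      (∑ p ∈ (Finset.range (Nat.floor (Real.sqrt x) + 1)).filter
          (fun p => Nat.Prime p ∧ (p : ℝ) ≤ Real.sqrt x),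
          (p : ℝ) * Real.exp (-c * Real.sqrt (Real.log p))) ≤
        C * x * Real.exp (-((1 - ε) * c / Real.sqrt 2) * Real.sqrt (Real.log x)) := by
  set A := (1 - ε) * c / Real.sqrt 2 with hA
  have hs2 : (0:ℝ) < Real.sqrt 2 := by positivity
  have hA0 : 0 < A := div_pos (mul_pos (by linarith) hc) hs2
  set δ := ε * (2 - ε) / 2 with hδ
  have hδ0 : 0 < δ := by
    apply div_pos (mul_pos hε0 (by linarith)); norm_num
  refine ⟨2 * Real.exp (A^2 / (4*δ)), by positivity, ?_⟩
  intro x hx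
  have hx0 : (0:ℝ) < x := by linarith
  have hL : 0 < Real.log x := Real.log_pos (by linarith)
  set L := Real.log x with hLdef
  have hsx4 : (4:ℝ) ≤ Real.sqrt x := by
    rw [show (4:ℝ) = Real.sqrt 16 by
      rw [show (16:ℝ) = 4^2 by norm_num, Real.sqrt_sq]; norm_num]
    exact Real.sqrt_le_sqrt hx
  have hsx0 : (0:ℝ) < Real.sqrt x := by linarith
  have hsxe : Real.sqrt x = Real.exp (L/2) := by
    have h : Real.exp (L/2) ^ 2 = x := by
      rw [sq, ← Real.exp_add, show L/2 + L/2 = L by ring]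
      exact Real.exp_log hx0
    rw [← h, Real.sqrt_sq (Real.exp_nonneg _)]
  set B := Real.exp (A^2/(4*δ)) * (Real.sqrt x * Real.exp (-A * Real.sqrt L)) with hB
  have hC1 : (1:ℝ) ≤ Real.exp (A^2/(4*δ)) := Real.one_le_exp (by positivity)
  have key : ∀ p ∈ (Finset.range (Nat.floor (Real.sqrt x) + 1)).filter
      (fun p => Nat.Prime p ∧ (p : ℝ) ≤ Real.sqrt x),
      (p : ℝ) * Real.exp (-c * Real.sqrt (Real.log p)) ≤ B := by
    intro p hp
    simp only [Finset.mem_filter] at hp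
    obtain ⟨-, hpp, hple⟩ := hp
    have hp2 : (2:ℝ) ≤ (p:ℝ) := by exact_mod_cast hpp.two_le
    have hp0 : (0:ℝ) < (p:ℝ) := by linarith
    by_cases hcase : (p:ℝ) ≤ Real.exp ((1-ε)^2/2 * L)
    · -- small primes
      have h1 : (p : ℝ) * Real.exp (-c * Real.sqrt (Real.log p)) ≤ (p:ℝ) := by
        apply mul_le_of_le_one_right hp0.le
        apply Real.exp_le_one_iff.mpr
        have h := Real.sqrt_nonneg (Real.log p)
        nlinarith
      have h2 : Real.exp ((1-ε)^2/2 * L) ≤ B := by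
        rw [hB, hsxe, ← Real.exp_add, ← Real.exp_add, Real.exp_le_exp]
        have hδeq : δ = 1/2 - (1-ε)^2/2 := by rw [hδ]; ring
        have hs : Real.sqrt L ^ 2 = L := Real.sq_sqrt hL.le
        have hsn : 0 ≤ Real.sqrt L := Real.sqrt_nonneg L
        have hkey : A * Real.sqrt L - (1/2 - (1-ε)^2/2) * L ≤ A^2/(4*δ) := by
          rw [← hδeq, le_div_iff₀ (by linarith : (0:ℝ) < 4*δ)]
          have hss : δ^2 * (Real.sqrt L)^2 = δ^2 * L := by rw [hs]
          nlinarith [sq_nonneg (2*δ*Real.sqrt L - A), hss, hs, hδ0.le]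
        linarith
      linarith
    · -- large primes
      push_neg at hcase
      have hlogp : (1-ε)^2/2 * L ≤ Real.log p :=
        le_of_lt ((Real.lt_log_iff_exp_lt hp0).mpr hcase)
      have hsqrt : (1-ε)/Real.sqrt 2 * Real.sqrt L ≤ Real.sqrt (Real.log p) := by
        have heq : (1-ε)/Real.sqrt 2 * Real.sqrt L
            = Real.sqrt (((1-ε)/Real.sqrt 2 * Real.sqrt L)^2) := by
          rw [Real.sqrt_sq (mul_nonneg (div_nonneg (by linarith) hs2.le) (Real.sqrt_nonneg _))]
        rw [heq]
        apply Real.sqrt_le_sqrt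
        rw [mul_pow, div_pow, Real.sq_sqrt (by norm_num : (0:ℝ) ≤ 2),
          Real.sq_sqrt hL.le]
        linarith
      have h1 : Real.exp (-c * Real.sqrt (Real.log p)) ≤ Real.exp (-A * Real.sqrt L) := by
        apply Real.exp_le_exp.mpr
        have : A * Real.sqrt L = c * ((1-ε)/Real.sqrt 2 * Real.sqrt L) := by
          rw [hA]; ring
        nlinarith
      have h2 : (p : ℝ) * Real.exp (-c * Real.sqrt (Real.log p)) ≤
          Real.sqrt x * Real.exp (-A * Real.sqrt L) := by
        apply mul_le_mul hple h1 (Real.exp_nonneg _) hsx0.le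
      calc (p : ℝ) * Real.exp (-c * Real.sqrt (Real.log p))
          ≤ Real.sqrt x * Real.exp (-A * Real.sqrt L) := h2
        _ ≤ B := by
            rw [hB]
            nth_rewrite 1 [← one_mul (Real.sqrt x * Real.exp (-A * Real.sqrt L))]
            apply mul_le_mul_of_nonneg_right hC1 (by positivity)
  have hsum := Finset.sum_le_card_nsmul _ _ B key
  have hcard : ((((Finset.range (Nat.floor (Real.sqrt x) + 1)).filter
      (fun p => Nat.Prime p ∧ (p : ℝ) ≤ Real.sqrt x)).card : ℝ)) ≤ 2 * Real.sqrt x := by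
    have h1 : (((Finset.range (Nat.floor (Real.sqrt x) + 1)).filter
        (fun p => Nat.Prime p ∧ (p : ℝ) ≤ Real.sqrt x)).card : ℕ)
        ≤ Nat.floor (Real.sqrt x) + 1 := by
      calc _ ≤ (Finset.range (Nat.floor (Real.sqrt x) + 1)).card :=
            Finset.card_filter_le _ _
        _ = Nat.floor (Real.sqrt x) + 1 := Finset.card_range _
    have h2 : ((Nat.floor (Real.sqrt x) : ℝ)) ≤ Real.sqrt x :=
      Nat.floor_le hsx0.le
    have h3 : (((Finset.range (Nat.floor (Real.sqrt x) + 1)).filter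
        (fun p => Nat.Prime p ∧ (p : ℝ) ≤ Real.sqrt x)).card : ℝ)
        ≤ (Nat.floor (Real.sqrt x) : ℝ) + 1 := by exact_mod_cast h1
    linarith
  have hB0 : 0 ≤ B := by rw [hB]; positivity
  calc (∑ p ∈ (Finset.range (Nat.floor (Real.sqrt x) + 1)).filter
          (fun p => Nat.Prime p ∧ (p : ℝ) ≤ Real.sqrt x),
          (p : ℝ) * Real.exp (-c * Real.sqrt (Real.log p)))
      ≤ _ • B := hsum
    _ = (((Finset.range (Nat.floor (Real.sqrt x) + 1)).filter
          (fun p => Nat.Prime p ∧ (p : ℝ) ≤ Real.sqrt x)).card : ℝ) * B := by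
        rw [nsmul_eq_mul]
    _ ≤ 2 * Real.sqrt x * B := mul_le_mul_of_nonneg_right hcard hB0
    _ = 2 * Real.exp (A^2 / (4*δ)) * (Real.sqrt x * Real.sqrt x) * Real.exp (-A * Real.sqrt L) := by
        rw [hB]; ring
    _ = 2 * Real.exp (A^2 / (4*δ)) * x * Real.exp (-A * Real.sqrt L) := by
        rw [Real.mul_self_sqrt hx0.le]
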